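/- Let W be a finite-dimensional real normed vector space, let C ⊆ W be a closed convex cone that is salient (C ∩ (−C) = {0}) and has nonempty interior, let T : W → W be a linear map with T(C) ⊆ C, and let u be a point in the interior of C. Then there is a constant A ≥ 1 such that A⁻¹ · ‖Tⁿ(u)‖ ≤ ‖Tⁿ‖ ≤ A · ‖Tⁿ(u)‖ for all n ≥ 0, where ‖Tⁿ‖ denotes the operator norm of the n-th iterate of T. -/

import Mathlib

/-- **Birkhoff–Perron–Frobenius comparison.** Let `W` be a finite-dimensional
real normed vector space, `C ⊆ W` a closed, salient convex cone with nonempty interior,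
`T` a (continuous) linear map with `T(C) ⊆ C`, and `u` an interior point of `C`.  Then
there is `A ≥ 1` with `A⁻¹ * ‖Tⁿ u‖ ≤ ‖Tⁿ‖ ≤ A * ‖Tⁿ u‖` for all `n`. -/
theorem birkhoff_norm_comparison
    {W : Type*} [NormedAddCommGroup W] [NormedSpace ℝ W] [FiniteDimensional ℝ W]
    (C : Set W)
    (hadd : ∀ x ∈ C, ∀ y ∈ C, x + y ∈ C)
    (hsmul : ∀ (c : ℝ), 0 ≤ c → ∀ x ∈ C, c • x ∈ C)
    (hclosed : IsClosed C)
    (hsalient : C ∩ (-C) = {0})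
    (T : W →L[ℝ] W) (hT : ∀ x ∈ C, T x ∈ C)
    (u : W) (hu : u ∈ interior C) :
    ∃ A : ℝ, 1 ≤ A ∧ ∀ n : ℕ,
      A⁻¹ * ‖(T ^ n) u‖ ≤ ‖T ^ n‖ ∧ ‖T ^ n‖ ≤ A * ‖(T ^ n) u‖ := by
  classical
  by_cases hW : Subsingleton W
  · refine ⟨1, le_rfl, fun n => ?_⟩
    have h0 : (T ^ n) u = 0 := Subsingleton.elim _ _
    have h1 : (T ^ n) = 0 := Subsingleton.elim _ _
    simp [h0, h1]
  · have : Nontrivial W := not_subsingleton_iff_nontrivial.mp hW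
    have huC : u ∈ C := interior_subset hu
    have h0C : (0:W) ∈ C := by simpa using hsmul 0 le_rfl u huC
    obtain ⟨δ, hδ, hball⟩ := Metric.mem_nhds_iff.mp (mem_interior_iff_mem_nhds.mp hu)
    set ε := δ/2 with hεdef
    have hε : 0 < ε := by positivity
    have hball' : ∀ x : W, ‖x‖ ≤ ε → u + x ∈ C := by
      intro x hx
      apply hball
      have : dist (u + x) u = ‖x‖ := by rw [dist_eq_norm]; simp
      rw [Metric.mem_ball, this]
      linarith
    -- u ≠ 0
    have hu0 : u ≠ 0 := by
      intro h
      obtain ⟨v, hv⟩ := exists_ne (0:W)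
      set w := (ε / ‖v‖) • v with hwdef
      have hvn : (0:ℝ) < ‖v‖ := norm_pos_iff.mpr hv
      have hw : ‖w‖ = ε := by
        rw [hwdef, norm_smul, Real.norm_eq_abs, abs_div, abs_of_pos hε, abs_of_pos hvn]
        field_simp
      have hw1 : w ∈ C := by have := hball' w (le_of_eq hw); rwa [h, zero_add] at this
      have hw2 : -w ∈ C := by
        have := hball' (-w) (by rw [norm_neg]; exact le_of_eq hw)
        rwa [h, zero_add] at this
      have : w ∈ C ∩ (-C) := ⟨hw1, by simpa [Set.mem_neg] using hw2⟩
      rw [hsalient] at this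
      simp only [Set.mem_singleton_iff] at this
      rw [this] at hw
      simp at hw
      linarith
    -- T^n maps C to C
    have hTn : ∀ n : ℕ, ∀ x ∈ C, (T ^ n) x ∈ C := by
      intro n
      induction n with
      | zero => intro x hx; simpa using hx
      | succ n ih =>
        intro x hx
        rw [pow_succ, ContinuousLinearMap.mul_apply]
        exact ih _ (hT x hx)
    -- key constant c
    obtain ⟨c, hc0, hc1, hc⟩ : ∃ c : ℝ, 0 < c ∧ c ≤ 1 ∧
        ∀ y ∈ C, ∀ z ∈ C, c * ‖y‖ ≤ ‖y + z‖ := by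
      set K : Set (W × W) := (C ×ˢ C) ∩ {p | ‖p.1‖ = 1} ∩ {p | ‖p.2‖ ≤ 2} with hKdef
      have hKclosed : IsClosed K := by
        refine (((hclosed.prod hclosed).inter ?_).inter ?_)
        · exact isClosed_eq (continuous_norm.comp continuous_fst) continuous_const
        · exact isClosed_le (continuous_norm.comp continuous_snd) continuous_const
      have hKbdd : Bornology.IsBounded K := by
        apply Bornology.IsBounded.subset (Metric.isBounded_closedBall (x := (0 : W × W)) (r := 2))
        intro p hp
        obtain ⟨⟨_, hp1⟩, hp2⟩ := hp
        rw [Metric.mem_closedBall, dist_zero_right, Prod.norm_def]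
        exact max_le (le_of_eq hp1 |>.trans (by norm_num)) hp2
      have hKcompact : IsCompact K := Metric.isCompact_of_isClosed_isBounded hKclosed hKbdd
      have hKne : K.Nonempty := by
        refine ⟨(‖u‖⁻¹ • u, 0), ⟨⟨?_, h0C⟩, ?_⟩, ?_⟩
        · exact hsmul _ (by positivity) u huC
        · have h := norm_pos_iff.mpr hu0
          simp only [Set.mem_setOf_eq]
          rw [norm_smul, Real.norm_eq_abs, abs_of_pos (inv_pos.mpr h),
            inv_mul_cancel₀ (ne_of_gt h)]
        · simp
      obtain ⟨p₀, hp₀K, hp₀min⟩ := hKcompact.exists_isMinOn hKne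
        ((continuous_norm.comp (continuous_fst.add continuous_snd)).continuousOn)
      set m := ‖p₀.1 + p₀.2‖ with hmdef
      have hm0 : 0 < m := by
        rcases (norm_nonneg (p₀.1 + p₀.2)).lt_or_eq with h | h
        · exact h
        · exfalso
          have hsum : p₀.1 + p₀.2 = 0 := norm_eq_zero.mp h.symm
          obtain ⟨⟨⟨h1, h2⟩, h3⟩, _⟩ := hp₀K
          have : p₀.1 ∈ C ∩ (-C) := by
            refine ⟨h1, ?_⟩
            rw [Set.mem_neg]
            have : -p₀.1 = p₀.2 := neg_eq_of_add_eq_zero_right hsum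
            rwa [this]
          rw [hsalient] at this
          simp only [Set.mem_singleton_iff] at this
          simp only [Set.mem_setOf_eq, this] at h3
          simpa using h3
      refine ⟨min m 1, lt_min hm0 one_pos, min_le_right _ _, ?_⟩
      intro y hy z hz
      by_cases hy0 : y = 0
      · simp [hy0, norm_nonneg]
      · have hr : (0:ℝ) < ‖y‖ := norm_pos_iff.mpr hy0
        by_cases hzr : ‖z‖ ≤ 2 * ‖y‖
        · have hmem : (‖y‖⁻¹ • y, ‖y‖⁻¹ • z) ∈ K := by
            refine ⟨⟨⟨hsmul _ (by positivity) y hy, hsmul _ (by positivity) z hz⟩, ?_⟩, ?_⟩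
            · simp [norm_smul, abs_of_pos (inv_pos.mpr hr)]; field_simp
            · simp only [Set.mem_setOf_eq, norm_smul, Real.norm_eq_abs,
                abs_of_pos (inv_pos.mpr hr)]
              rw [inv_mul_le_iff₀ hr]
              linarith
          have := hp₀min hmem
          simp only [Set.mem_setOf_eq, Function.comp_apply, Pi.add_apply] at this
          have heq : ‖(‖y‖⁻¹ • y) + (‖y‖⁻¹ • z)‖ = ‖y‖⁻¹ * ‖y + z‖ := by
            rw [← smul_add, norm_smul, Real.norm_eq_abs, abs_of_pos (inv_pos.mpr hr)]
          rw [heq] at this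
          have hmle : m * ‖y‖ ≤ ‖y + z‖ := by
            calc m * ‖y‖ ≤ (‖y‖⁻¹ * ‖y + z‖) * ‖y‖ := by nlinarith
              _ = ‖y + z‖ := by field_simp
          calc min m 1 * ‖y‖ ≤ m * ‖y‖ := by nlinarith [min_le_left m 1]
            _ ≤ ‖y + z‖ := hmle
        · have h1 : ‖y‖ ≤ ‖y + z‖ := by
            have h2 := norm_sub_le (y + z) y
            rw [add_sub_cancel_left] at h2
            push_neg at hzr
            linarith
          calc min m 1 * ‖y‖ ≤ 1 * ‖y‖ := by nlinarith [min_le_right m 1]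
            _ ≤ ‖y + z‖ := by linarith
    -- main bound
    set B := (2 / c + 1) / ε with hBdef
    have hB0 : 0 < B := by positivity
    have hbound : ∀ n : ℕ, ‖T ^ n‖ ≤ B * ‖(T ^ n) u‖ := by
      intro n
      apply ContinuousLinearMap.opNorm_le_bound _ (by positivity)
      intro x
      by_cases hx0 : x = 0
      · simp [hx0]
      · have hxn : (0:ℝ) < ‖x‖ := norm_pos_iff.mpr hx0
        -- scale x to norm ε
        set s := ε / ‖x‖ with hsdef
        have hs0 : 0 < s := by positivity
        have hsx : ‖s • x‖ = ε := by
          rw [norm_smul, Real.norm_eq_abs, abs_of_pos hs0, hsdef]; field_simp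
        have hy : u + s • x ∈ C := hball' _ (le_of_eq hsx)
        have hz : u + (-(s • x)) ∈ C := hball' _ (by rw [norm_neg]; exact le_of_eq hsx)
        have hTy := hTn n _ hy
        have hTz := hTn n _ hz
        have hsum : (T ^ n) (u + s • x) + (T ^ n) (u + (-(s • x))) = (2:ℝ) • ((T ^ n) u) := by
          rw [← map_add]
          have h2u : u + s • x + (u + -(s • x)) = (2:ℝ) • u := by module
          rw [h2u, map_smul]
        have hkey : c * ‖(T ^ n) (u + s • x)‖ ≤ 2 * ‖(T ^ n) u‖ := by
          have := hc _ hTy _ hTz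
          rw [hsum] at this
          rw [norm_smul] at this
          simpa using this
        have hTx : ‖(T ^ n) (s • x)‖ ≤ (2 / c + 1) * ‖(T ^ n) u‖ := by
          have heq : (T ^ n) (s • x) = (T ^ n) (u + s • x) - (T ^ n) u := by
            rw [map_add, add_sub_cancel_left]
          rw [heq]
          calc ‖(T ^ n) (u + s • x) - (T ^ n) u‖
              ≤ ‖(T ^ n) (u + s • x)‖ + ‖(T ^ n) u‖ := norm_sub_le _ _
            _ ≤ 2 / c * ‖(T ^ n) u‖ + ‖(T ^ n) u‖ := by
                have : ‖(T ^ n) (u + s • x)‖ ≤ 2 / c * ‖(T ^ n) u‖ := by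
                  rw [div_mul_eq_mul_div, le_div_iff₀ hc0]
                  linarith [hkey]
                linarith
            _ = (2 / c + 1) * ‖(T ^ n) u‖ := by ring
        have hsmulTx : ‖(T ^ n) (s • x)‖ = s * ‖(T ^ n) x‖ := by
          rw [map_smul, norm_smul, Real.norm_eq_abs, abs_of_pos hs0]
        rw [hsmulTx] at hTx
        have : ‖(T ^ n) x‖ ≤ (2 / c + 1) * ‖(T ^ n) u‖ / s := by
          rw [le_div_iff₀ hs0]; linarith
        calc ‖(T ^ n) x‖ ≤ (2 / c + 1) * ‖(T ^ n) u‖ / s := this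
          _ = B * ‖(T ^ n) u‖ * ‖x‖ := by
              rw [hBdef, hsdef]; field_simp; try ring
    refine ⟨max (max 1 ‖u‖) B, le_trans (le_max_left 1 ‖u‖) (le_max_left _ _), fun n => ?_⟩
    set A := max (max 1 ‖u‖) B with hAdef
    have hA1 : (1:ℝ) ≤ A := le_trans (le_max_left 1 ‖u‖) (le_max_left _ _)
    have hA0 : (0:ℝ) < A := lt_of_lt_of_le one_pos hA1
    constructor
    · have h1 : ‖(T ^ n) u‖ ≤ ‖T ^ n‖ * ‖u‖ := (T ^ n).le_opNorm u
      have h2 : ‖u‖ ≤ A := le_trans (le_max_right 1 ‖u‖) (le_max_left _ _)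
      rw [inv_mul_le_iff₀ hA0]
      calc ‖(T ^ n) u‖ ≤ ‖T ^ n‖ * ‖u‖ := h1
        _ ≤ A * ‖T ^ n‖ := by nlinarith [norm_nonneg (T ^ n)]
    · calc ‖T ^ n‖ ≤ B * ‖(T ^ n) u‖ := hbound n
        _ ≤ A * ‖(T ^ n) u‖ := by
            have : B ≤ A := le_max_right _ _
            nlinarith [norm_nonneg ((T ^ n) u)]
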